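/- If Φ : M → M is a unital Schwartz map on a von Neumann algebra M (i.e., Φ(1)=1 and Φ(a*)Φ(a) ≤ Φ(a*a) for all a), and Φ admits an inverse Φ⁻¹ which is also a unital Schwartz map, then Φ is a *-automorphism of M. -/

import Mathlib

set_option linter.unusedSectionVars false


open scoped ComplexOrder

section
variable {M : Type*} [NormedRing M] [StarRing M] [CStarRing M] [NormedAlgebra ℂ M]
  [StarModule ℂ M] [CompleteSpace M] [PartialOrder M] [StarOrderedRing M]

/-- The multiplicative domain of a linear map `Φ`. -/
def multDomain (Φ : Module.End ℂ M) : Set M :=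
  {a : M | Φ (star a * a) = Φ (star a) * Φ a ∧ Φ (a * star a) = Φ a * Φ (star a)}

/-- `φ` is a state: unital and positive. -/
def IsState (φ : M →ₗ[ℂ] ℂ) : Prop :=
  φ 1 = 1 ∧ ∀ a : M, 0 ≤ φ (star a * a)

/-- `φ` is faithful. -/
def IsFaithful (φ : M →ₗ[ℂ] ℂ) : Prop :=
  ∀ a : M, φ (star a * a) = 0 → a = 0

/-- `Φ` is a unital Schwartz map. -/
def IsSchwartz (Φ : Module.End ℂ M) : Prop :=
  Φ 1 = 1 ∧ ∀ a : M, star (Φ a) * Φ a ≤ Φ (star a * a)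

/-- The `φ`-orthogonal complement of a set `R`. -/
def phiPerp (φ : M →ₗ[ℂ] ℂ) (R : Set M) : Set M :=
  {a : M | ∀ x ∈ R, φ (star a * x) = 0}


lemma schwartz_pos {Φ : Module.End ℂ M} (h : IsSchwartz Φ) {x : M} (hx : 0 ≤ x) :
    0 ≤ Φ x := by
  rw [StarOrderedRing.nonneg_iff] at hx
  induction hx using AddSubmonoid.closure_induction with
  | mem y hy =>
      obtain ⟨s, rfl⟩ := hy
      exact le_trans (star_mul_self_nonneg _) (h.2 s)
  | zero => simp
  | add x y _ _ hx hy => rw [map_add]; exact add_nonneg hx hy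

lemma schwartz_key {Φ Ψ : Module.End ℂ M} (hΦ : IsSchwartz Φ) (hΨ : IsSchwartz Ψ)
    (hinv₁ : ∀ a : M, Φ (Ψ a) = a) (hinv₂ : ∀ a : M, Ψ (Φ a) = a) (a : M) :
    Φ (star a * a) = star (Φ a) * Φ a := by
  set u := Φ (star a * a) - star (Φ a) * Φ a with hu
  have hu0 : 0 ≤ u := sub_nonneg.2 (hΦ.2 a)
  have h1 : 0 ≤ Ψ u := schwartz_pos hΨ hu0
  have h2 : Ψ u ≤ 0 := by
    have hs := hΨ.2 (Φ a)
    rw [hinv₂] at hs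
    have : Ψ u = star a * a - Ψ (star (Φ a) * Φ a) := by
      rw [hu, map_sub, hinv₂]
    rw [this]
    exact sub_nonpos.2 hs
  have h3 : Ψ u = 0 := le_antisymm h2 h1
  have h4 : u = 0 := by
    have := hinv₁ u
    rw [h3, map_zero] at this
    exact this.symm
  have := sub_eq_zero.mp h4
  exact this

lemma schwartz_mult {Φ Ψ : Module.End ℂ M} (hΦ : IsSchwartz Φ) (hΨ : IsSchwartz Ψ)
    (hinv₁ : ∀ a : M, Φ (Ψ a) = a) (hinv₂ : ∀ a : M, Ψ (Φ a) = a) (a b : M) :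
    Φ (star b * a) = star (Φ b) * Φ a := by
  have key := schwartz_key hΦ hΨ hinv₁ hinv₂
  have expand_sq : ∀ (t : ℂ) (x y : M), star (x + t • y) * (x + t • y)
      = star x * x + t • (star x * y) + star t • (star y * x)
        + (star t * t) • (star y * y) := by
    intro t x y
    simp only [star_add, star_smul, add_mul, mul_add, smul_mul_assoc, mul_smul_comm,
      smul_smul]
    module
  have main : ∀ t : ℂ,
      t • (Φ (star a * b) - star (Φ a) * Φ b)
        + star t • (Φ (star b * a) - star (Φ b) * Φ a) = 0 := by
    intro t
    have h := key (a + t • b)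
    rw [expand_sq t a b, map_add, map_add, map_add, map_smul, map_smul, map_smul,
      show Φ (a + t • b) = Φ a + t • Φ b by rw [map_add, map_smul],
      expand_sq t (Φ a) (Φ b)] at h
    linear_combination (norm := module) h - key a - (star t * t) • key b
  have m1 := main 1
  have mI := main Complex.I
  simp only [one_smul, star_one] at m1
  have hDC : Complex.I • ((Φ (star a * b) - star (Φ a) * Φ b)
      - (Φ (star b * a) - star (Φ b) * Φ a)) = 0 := by
    have : star Complex.I = -Complex.I := by
      simp [Complex.star_def, Complex.conj_I]
    rw [this] at mI
    linear_combination (norm := module) mI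
  have hDC' : (Φ (star a * b) - star (Φ a) * Φ b)
      - (Φ (star b * a) - star (Φ b) * Φ a) = 0 := by
    have := congrArg (fun x => (Complex.I)⁻¹ • x) hDC
    simpa [smul_smul, inv_mul_cancel₀ Complex.I_ne_zero] using this
  have h2C : (2 : ℂ) • (Φ (star b * a) - star (Φ b) * Φ a) = 0 := by
    linear_combination (norm := module) m1 - hDC'
  have hC : Φ (star b * a) - star (Φ b) * Φ a = 0 := by
    have := congrArg (fun x => ((2:ℂ))⁻¹ • x) h2C
    simpa [smul_smul] using this
  exact sub_eq_zero.mp hC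

/-- a unital Schwartz map with a unital Schwartz inverse is a *-automorphism. -/
theorem schwartz_inverse_is_automorphism
    (Φ Ψ : Module.End ℂ M) (hΦ : IsSchwartz Φ) (hΨ : IsSchwartz Ψ)
    (hinv₁ : ∀ a : M, Φ (Ψ a) = a) (hinv₂ : ∀ a : M, Ψ (Φ a) = a) :
    (∀ a b : M, Φ (a * b) = Φ a * Φ b) ∧ (∀ a : M, Φ (star a) = star (Φ a)) ∧
      Function.Bijective Φ := by
  have mult := schwartz_mult hΦ hΨ hinv₁ hinv₂
  have hstar : ∀ a : M, Φ (star a) = star (Φ a) := by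
    intro a
    have := mult 1 a
    rwa [mul_one, hΦ.1, mul_one] at this
  refine ⟨?_, hstar, ?_⟩
  · intro a b
    have := mult b (star a)
    rwa [star_star, hstar a, star_star] at this
  · exact ⟨Function.LeftInverse.injective hinv₂, Function.RightInverse.surjective hinv₁⟩


end
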